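/- The functions h_C(x) = ∏_{1≤i<j≤k}(x_j² − x_i²) · ∏_{i=1}^k x_i and h_D(x) = ∏_{1≤i<j≤k}(x_j² − x_i²) are harmonic on ℝ^k, i.e., Δ h_C = 0 and Δ h_D = 0. -/

import Mathlib

open Finset Real

/-- The Laplacian of `f : ℝ^k → ℝ`, as the sum of second derivatives of the
one-dimensional coordinate slices. -/
noncomputable def lap {k : ℕ} (f : (Fin k → ℝ) → ℝ) (x : Fin k → ℝ) : ℝ :=
  ∑ i : Fin k, deriv (deriv (fun t => f (Function.update x i t))) (x i)

lemma deriv_monsum {ι : Type*} (S : Finset ι) (c C : ι → ℝ) (n : ι → ℕ) :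
    deriv (fun t : ℝ => ∑ s ∈ S, c s * (t ^ n s * C s))
      = fun t : ℝ => ∑ s ∈ S, (c s * n s) * (t ^ (n s - 1) * C s) := by
  funext t
  rw [deriv_fun_sum (fun s _ => by fun_prop)]
  refine Finset.sum_congr rfl fun s _ => ?_
  rw [deriv_const_mul _ (by fun_prop), deriv_mul_const (by fun_prop), deriv_pow_field]
  ring

lemma prod_update_pow {k : ℕ} (x : Fin k → ℝ) (u : Fin k → ℕ) (i : Fin k) (e : ℕ) :
    x i ^ e * ∏ j ∈ Finset.univ.erase i, x j ^ u j
      = ∏ j, x j ^ (Function.update u i e j) := by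
  rw [← Finset.mul_prod_erase Finset.univ _ (Finset.mem_univ i)]
  congr 1
  · rw [Function.update_self]
  · exact Finset.prod_congr rfl fun j hj => by
      rw [Function.update_of_ne (Finset.ne_of_mem_erase hj)]

lemma lap_monsum {k : ℕ} {ι : Type*} (S : Finset ι) (c : ι → ℝ) (a : ι → Fin k → ℕ)
    (x : Fin k → ℝ) :
    lap (fun y => ∑ s ∈ S, c s * ∏ j, y j ^ a s j) x
      = ∑ i : Fin k, ∑ s ∈ S,
          (c s * ((a s i * (a s i - 1) : ℕ) : ℝ)) *
            (x i ^ (a s i - 2) * ∏ j ∈ Finset.univ.erase i, x j ^ a s j) := by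
  unfold lap
  refine Finset.sum_congr rfl fun i _ => ?_
  have hslice : (fun t : ℝ => ∑ s ∈ S, c s * ∏ j, (Function.update x i t) j ^ a s j)
      = fun t : ℝ => ∑ s ∈ S, c s * (t ^ a s i * ∏ j ∈ Finset.univ.erase i, x j ^ a s j) := by
    funext t
    refine Finset.sum_congr rfl fun s _ => ?_
    congr 1
    rw [← Finset.mul_prod_erase Finset.univ _ (Finset.mem_univ i)]
    congr 1
    · rw [Function.update_self]
    · exact Finset.prod_congr rfl fun j hj => by
        rw [Function.update_of_ne (Finset.ne_of_mem_erase hj)]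
  rw [hslice, deriv_monsum, deriv_monsum]
  refine Finset.sum_congr rfl fun s _ => ?_
  have h2 : a s i - 1 - 1 = a s i - 2 := by omega
  rw [h2]
  push_cast [Nat.cast_mul]
  ring


lemma lap_perm_sum (k c : ℕ) (hc : c ≤ 1) (x : Fin k → ℝ) :
    lap (fun y => ∑ σ : Equiv.Perm (Fin k),
        ((Equiv.Perm.sign σ : ℤ) : ℝ) * ∏ i, y i ^ (2 * (σ i : ℕ) + c)) x = 0 := by
  classical
  rw [lap_monsum Finset.univ (fun σ : Equiv.Perm (Fin k) => ((Equiv.Perm.sign σ : ℤ) : ℝ))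
      (fun σ i => 2 * (σ i : ℕ) + c) x, Finset.sum_comm, ← Finset.sum_product']
  set F : Equiv.Perm (Fin k) × Fin k → ℝ := fun p =>
    (((Equiv.Perm.sign p.1 : ℤ) : ℝ) *
        (((2 * ((p.1 p.2 : Fin k) : ℕ) + c) * (2 * ((p.1 p.2 : Fin k) : ℕ) + c - 1) : ℕ) : ℝ)) *
      (x p.2 ^ (2 * ((p.1 p.2 : Fin k) : ℕ) + c - 2) *
        ∏ j ∈ Finset.univ.erase p.2, x j ^ (2 * ((p.1 j : Fin k) : ℕ) + c)) with hF
  show ∑ p ∈ Finset.univ ×ˢ Finset.univ, F p = 0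
  have hpr : ∀ (σ : Equiv.Perm (Fin k)) (i : Fin k),
      ((σ i : ℕ) - 1) < k := fun σ i => lt_of_le_of_lt (Nat.sub_le _ _) (σ i).isLt
  set pr : Equiv.Perm (Fin k) → Fin k → Fin k :=
    fun σ i => σ⁻¹ ⟨(σ i : ℕ) - 1, hpr σ i⟩ with hprdef
  set g : Equiv.Perm (Fin k) × Fin k → Equiv.Perm (Fin k) × Fin k :=
    fun p => (p.1 * Equiv.swap p.2 (pr p.1 p.2), pr p.1 p.2) with hg
  -- basic facts
  have hval : ∀ (σ : Equiv.Perm (Fin k)) (i : Fin k), (σ (pr σ i) : ℕ) = (σ i : ℕ) - 1 := by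
    intro σ i
    simp [hprdef]
  have hne : ∀ (σ : Equiv.Perm (Fin k)) (i : Fin k), 1 ≤ (σ i : ℕ) → pr σ i ≠ i := by
    intro σ i hm h
    have := hval σ i
    rw [h] at this
    omega
  have hzero : ∀ p : Equiv.Perm (Fin k) × Fin k, ((p.1 p.2 : Fin k) : ℕ) = 0 → F p = 0 := by
    intro p hm
    have h0 : (2 * ((p.1 p.2 : Fin k) : ℕ) + c) * (2 * ((p.1 p.2 : Fin k) : ℕ) + c - 1) = 0 := by
      rw [hm]; interval_cases c <;> norm_num
    simp only [hF]
    rw [h0]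
    simp
  have hfix : ∀ p : Equiv.Perm (Fin k) × Fin k, ((p.1 p.2 : Fin k) : ℕ) = 0 → g p = p := by
    rintro ⟨σ, i⟩ hm
    dsimp only at hm
    have h1 : pr σ i = i := by
      have h2 : (⟨(σ i : ℕ) - 1, hpr σ i⟩ : Fin k) = σ i := by
        apply Fin.ext; simp [hm]
      simp [hprdef, h2]
    simp only [hg, h1, Equiv.swap_self]
    simp; rfl
  refine Finset.sum_involution (fun p _ => g p) ?_ ?_
      (fun p _ => Finset.mem_product.2 ⟨Finset.mem_univ _, Finset.mem_univ _⟩) ?_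
  · -- F p + F (g p) = 0
    rintro ⟨σ, i⟩ -
    show F (σ, i) + F (g (σ, i)) = 0
    rcases Nat.eq_zero_or_pos ((σ i : Fin k) : ℕ) with hm | hm
    · rw [hfix ⟨σ, i⟩ hm, hzero ⟨σ, i⟩ hm]; ring
    · set m : ℕ := ((σ i : Fin k) : ℕ) with hmdef
      set i' : Fin k := pr σ i with hi'
      have hσi' : ((σ i' : Fin k) : ℕ) = m - 1 := hval σ i
      have hne' : i' ≠ i := hne σ i hm
      set τ : Equiv.Perm (Fin k) := σ * Equiv.swap i i' with hτ
      have hτi' : τ i' = σ i := by simp [hτ, Equiv.swap_apply_right]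
      have hτi : τ i = σ i' := by simp [hτ, Equiv.swap_apply_left]
      have hτj : ∀ j : Fin k, j ≠ i → j ≠ i' → τ j = σ j := by
        intro j h1 h2
        simp [hτ, Equiv.swap_apply_of_ne_of_ne h1 h2]
      have hsign : ((Equiv.Perm.sign τ : ℤ) : ℝ) = -((Equiv.Perm.sign σ : ℤ) : ℝ) := by
        rw [hτ, Equiv.Perm.sign_mul, Equiv.Perm.sign_swap (Ne.symm hne')]
        push_cast; ring
      have hprodL : x i ^ (2 * m + c - 2) * ∏ j ∈ Finset.univ.erase i, x j ^ (2 * ((σ j : Fin k) : ℕ) + c)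
          = ∏ j, x j ^ (Function.update (fun j => 2 * ((σ j : Fin k) : ℕ) + c) i (2 * m + c - 2) j) :=
        prod_update_pow x _ i _
      have hprodR : x i' ^ (2 * m + c - 2) * ∏ j ∈ Finset.univ.erase i', x j ^ (2 * ((τ j : Fin k) : ℕ) + c)
          = ∏ j, x j ^ (Function.update (fun j => 2 * ((τ j : Fin k) : ℕ) + c) i' (2 * m + c - 2) j) :=
        prod_update_pow x _ i' _
      have hupd : Function.update (fun j => 2 * ((σ j : Fin k) : ℕ) + c) i (2 * m + c - 2)
          = Function.update (fun j => 2 * ((τ j : Fin k) : ℕ) + c) i' (2 * m + c - 2) := by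
        funext j
        rcases eq_or_ne j i with rfl | hji
        · rw [Function.update_self, Function.update_of_ne (Ne.symm hne')]
          have : ((τ j : Fin k) : ℕ) = m - 1 := by rw [hτi]; exact hσi'
          omega
        · rcases eq_or_ne j i' with rfl | hji'
          · rw [Function.update_of_ne hji, Function.update_self]
            omega
          · rw [Function.update_of_ne hji, Function.update_of_ne hji', hτj j hji hji']
      show F (σ, i) + F (τ, i') = 0
      simp only [hF]
      rw [hτi', ← hmdef]
      rw [show x i' ^ (2 * m + c - 2) * ∏ j ∈ Finset.univ.erase i', x j ^ (2 * ((τ j : Fin k) : ℕ) + c)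
            = x i ^ (2 * m + c - 2) * ∏ j ∈ Finset.univ.erase i, x j ^ (2 * ((σ j : Fin k) : ℕ) + c) by
          rw [hprodL, hprodR, hupd]]
      rw [hsign]
      ring
  · -- F p ≠ 0 → g p ≠ p
    rintro ⟨σ, i⟩ - hFne
    rcases Nat.eq_zero_or_pos ((σ i : Fin k) : ℕ) with hm | hm
    · exact absurd (hzero ⟨σ, i⟩ hm) hFne
    · intro h
      exact hne σ i hm (congrArg Prod.snd h)
  · -- involution
    rintro ⟨σ, i⟩ -
    show g (g (σ, i)) = (σ, i)
    rcases Nat.eq_zero_or_pos ((σ i : Fin k) : ℕ) with hm | hm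
    · rw [hfix ⟨σ, i⟩ hm, hfix ⟨σ, i⟩ hm]
    · set i' : Fin k := pr σ i with hi'
      have hσi' : ((σ i' : Fin k) : ℕ) = (σ i : ℕ) - 1 := hval σ i
      have hne' : i' ≠ i := hne σ i hm
      set τ : Equiv.Perm (Fin k) := σ * Equiv.swap i i' with hτ
      have hτi' : τ i' = σ i := by simp [hτ, Equiv.swap_apply_right]
      have hτi : τ i = σ i' := by simp [hτ, Equiv.swap_apply_left]
      have hgp : g (σ, i) = (τ, i') := rfl
      rw [hgp]
      have hprτ : pr τ i' = i := by
        have h1 : (⟨((τ i' : Fin k) : ℕ) - 1, hpr τ i'⟩ : Fin k) = τ i := by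
          apply Fin.ext
          show ((τ i' : Fin k) : ℕ) - 1 = ((τ i : Fin k) : ℕ)
          rw [hτi', hτi, hσi']
        simp [hprdef, h1]
      show (τ * Equiv.swap i' (pr τ i'), pr τ i') = (σ, i)
      rw [hprτ]
      refine Prod.ext ?_ rfl
      rw [hτ, Equiv.swap_comm i' i, mul_assoc, Equiv.swap_mul_self, mul_one]

lemma hD_expand (k : ℕ) (y : Fin k → ℝ) :
    ∏ i : Fin k, ∏ j ∈ Finset.Ioi i, (y j ^ 2 - y i ^ 2)
      = ∑ σ : Equiv.Perm (Fin k),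
          ((Equiv.Perm.sign σ : ℤ) : ℝ) * ∏ i, y i ^ (2 * (σ i : ℕ)) := by
  have h := Matrix.det_vandermonde (fun i => y i ^ 2)
  rw [← h, ← Matrix.det_transpose, Matrix.det_apply']
  refine Finset.sum_congr rfl fun σ _ => ?_
  congr 1
  refine Finset.prod_congr rfl fun i _ => ?_
  rw [Matrix.transpose_apply, Matrix.vandermonde_apply, ← pow_mul]

/-- The réduites `h_C(x) = ∏_{i<j}(x_j² − x_i²) ∏_i x_i` and
`h_D(x) = ∏_{i<j}(x_j² − x_i²)` are harmonic on `ℝ^k`. -/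
theorem reduites_CD_harmonic (k : ℕ) (x : Fin k → ℝ) :
    lap (fun y : Fin k → ℝ =>
        (∏ i : Fin k, ∏ j ∈ Finset.Ioi i, (y j ^ 2 - y i ^ 2)) * ∏ i : Fin k, y i) x = 0 ∧
    lap (fun y : Fin k → ℝ =>
        ∏ i : Fin k, ∏ j ∈ Finset.Ioi i, (y j ^ 2 - y i ^ 2)) x = 0 := by
  constructor
  · have he := lap_perm_sum k 1 le_rfl x
    have hfun : (fun y : Fin k → ℝ =>
        (∏ i : Fin k, ∏ j ∈ Finset.Ioi i, (y j ^ 2 - y i ^ 2)) * ∏ i : Fin k, y i)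
        = fun y : Fin k → ℝ => ∑ σ : Equiv.Perm (Fin k),
            ((Equiv.Perm.sign σ : ℤ) : ℝ) * ∏ i, y i ^ (2 * (σ i : ℕ) + 1) := by
      funext y
      rw [hD_expand, Finset.sum_mul]
      refine Finset.sum_congr rfl fun σ _ => ?_
      rw [mul_assoc, ← Finset.prod_mul_distrib]
      exact congrArg _ (Finset.prod_congr rfl fun i _ => (pow_succ _ _).symm)
    rw [hfun]
    exact he
  · have he := lap_perm_sum k 0 (by norm_num) x
    simp only [Nat.add_zero] at he
    have hfun : (fun y : Fin k → ℝ =>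
        ∏ i : Fin k, ∏ j ∈ Finset.Ioi i, (y j ^ 2 - y i ^ 2))
        = fun y : Fin k → ℝ => ∑ σ : Equiv.Perm (Fin k),
            ((Equiv.Perm.sign σ : ℤ) : ℝ) * ∏ i, y i ^ (2 * (σ i : ℕ)) :=
      funext fun y => hD_expand k y
    rw [hfun]
    exact he
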